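/- With Δ as above, the polytope P_Δ = ∩_{α∈Δ(1)} {I : ⟨I, e(α)⟩ ≥ −1} in (ℝⁿ)* is compact. -/

import Mathlib

/-- A complete fan in `ℝⁿ` with smooth maximal cones, recorded via its maximal
cones: each maximal cone `σ` is given by generators `gen σ t` forming a
`ℤ`-basis of `ℤⁿ`, and every point of `ℝⁿ` lies in the cone spanned by the
generators of some maximal cone.  Since the fan is complete, its primitive ray
generators are exactly the vectors `gen σ t`. -/
structure SmoothCompleteFan (n : ℕ) where
  ι : Type
  fin : Fintype ι
  gen : ι → Fin n → Fin n → ℤ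
  smooth : ∀ σ : ι, ∃ b : Module.Basis (Fin n) ℤ (Fin n → ℤ), ∀ t, b t = gen σ t
  complete : ∀ x : Fin n → ℝ, ∃ σ : ι, ∃ c : Fin n → ℝ, (∀ t, 0 ≤ c t) ∧
    x = ∑ t, c t • (fun j => ((gen σ t j : ℝ)))

/-- The polytope `P_Δ = ∩_{rays α} {I : ⟨I, e(α)⟩ ≥ -1}` of a complete fan with
smooth maximal cones is compact. -/
theorem stmt3 (n : ℕ) (Δ : SmoothCompleteFan n) :
    IsCompact {I : Fin n → ℝ | ∀ (σ : Δ.ι) (t : Fin n), -1 ≤ ∑ j, I j * Δ.gen σ t j} := by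
  set S := {I : Fin n → ℝ | ∀ (σ : Δ.ι) (t : Fin n), -1 ≤ ∑ j, I j * Δ.gen σ t j} with hS
  -- Step 1: linear functionals in any direction are bounded below on S
  have key : ∀ x : Fin n → ℝ, ∃ C : ℝ, ∀ I ∈ S, -C ≤ ∑ j, I j * x j := by
    intro x
    obtain ⟨σ, c, hc, hx⟩ := Δ.complete x
    refine ⟨∑ t, c t, fun I hI => ?_⟩
    have hxe : ∑ j, I j * x j = ∑ t, c t * ∑ j, I j * Δ.gen σ t j := by
      subst hx
      simp only [Finset.sum_apply, Pi.smul_apply, smul_eq_mul, Finset.mul_sum]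
      rw [Finset.sum_comm]
      exact Finset.sum_congr rfl fun t _ => Finset.sum_congr rfl fun j _ => by ring
    rw [hxe]
    calc -∑ t, c t = ∑ t, c t * (-1) := by simp
      _ ≤ ∑ t, c t * ∑ j, I j * Δ.gen σ t j :=
        Finset.sum_le_sum fun t _ => mul_le_mul_of_nonneg_left (hI σ t) (hc t)
  choose C hC using key
  -- Step 2: S is contained in a box
  have hsub : S ⊆ Set.Icc (fun i => -(C (Pi.single i 1))) (fun i => C (Pi.single i (-1))) := by
    intro I hI
    constructor <;> intro i
    · have := hC (Pi.single i 1) I hI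
      simpa [Pi.single_apply, Finset.sum_ite_eq', mul_comm] using this
    · have := hC (Pi.single i (-1)) I hI
      have h2 : ∑ j, I j * (Pi.single i (-1) : Fin n → ℝ) j = -I i := by
        simp [Pi.single_apply, Finset.sum_ite_eq', mul_comm]
      rw [h2] at this
      linarith
  have hclosed : IsClosed S := by
    have : S = ⋂ σ : Δ.ι, ⋂ t : Fin n, {I : Fin n → ℝ | -1 ≤ ∑ j, I j * Δ.gen σ t j} := by
      ext I; simp [hS, Set.mem_iInter]
    rw [this]
    refine isClosed_iInter fun σ => isClosed_iInter fun t => ?_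
    exact isClosed_le continuous_const
      (continuous_finset_sum _ fun j _ => (continuous_apply j).mul continuous_const)
  exact (isCompact_Icc).of_isClosed_subset hclosed hsub
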